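/- Let a, r be positive integers with ar even, and let k be an integer with 0 ≤ k ≤ a(r-1). Then the complete r-partite graph K_{a,...,a} (each part of size a) contains a k-regular spanning subgraph. -/

import Mathlib

open SimpleGraph

/-- Degree of a vertex, via `Set.ncard` (avoids decidability assumptions). -/
noncomputable def ndeg {V : Type*} (G : SimpleGraph V) (v : V) : ℕ :=
  (G.neighborSet v).ncard

/-- A graph contains a copy of the star `S_t` (with `t` edges) iff some vertex
has degree at least `t`. -/
def ContainsStar {V : Type*} (G : SimpleGraph V) (t : ℕ) : Prop :=
  ∃ v, t ≤ ndeg G v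

/-- `G` is `S_t`-saturated: it contains no copy of `S_t`, but adding any missing
edge creates one. -/
def StarSaturated {V : Type*} (G : SimpleGraph V) (t : ℕ) : Prop :=
  ¬ ContainsStar G t ∧
    ∀ u v : V, u ≠ v → ¬ G.Adj u v → ContainsStar (G ⊔ SimpleGraph.edge u v) t

open Classical in
lemma cayley_exists (a r : ℕ) (ha : 0 < a) (hr : 2 ≤ r) (hev : Even (a * r))
    (S : Finset (ZMod (a * r))) (m : Prop)
    (hsym : ∀ s ∈ S, -s ∈ S)
    (hmod : ∀ s ∈ S, ZMod.castHom (dvd_mul_left r a) (ZMod r) s ≠ 0)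
    (hm : m → (1 : ZMod (a * r)) ∉ S ∧ (-1 : ZMod (a * r)) ∉ S) :
    ∃ H : SimpleGraph (Fin r × Fin a),
      H ≤ SimpleGraph.fromRel (fun x y : Fin r × Fin a => x.1 ≠ y.1) ∧
        ∀ v, ndeg H v = S.card + (if m then 1 else 0) := by
  have hn2 : 2 ≤ a * r := le_trans hr (Nat.le_mul_of_pos_left r ha)
  haveI : NeZero (a * r) := ⟨by omega⟩
  haveI : Fact (1 < r) := ⟨hr⟩
  haveI : Fact (1 < a * r) := ⟨hn2⟩
  -- the vertex labelling
  set f : Fin r × Fin a → ZMod (a*r) := fun v => ((v.1.val + r * v.2.val : ℕ) : ZMod (a*r)) with hf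
  have hlt : ∀ v : Fin r × Fin a, v.1.val + r * v.2.val < a*r := by
    intro v
    calc v.1.val + r * v.2.val < r + r * v.2.val := by
          exact Nat.add_lt_add_right v.1.isLt _
      _ = r * (v.2.val + 1) := by ring
      _ ≤ r * a := Nat.mul_le_mul_left r v.2.isLt
      _ = a*r := mul_comm r a
  have hinj : Function.Injective f := by
    intro x y hxy
    have hx := ZMod.val_cast_of_lt (hlt x)
    have hy := ZMod.val_cast_of_lt (hlt y)
    have heq : x.1.val + r * x.2.val = y.1.val + r * y.2.val := by
      rw [← hx, ← hy]; exact congrArg ZMod.val hxy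
    have h1 : x.1.val = y.1.val := by
      have e1 := Nat.add_mul_mod_self_left x.1.val r x.2.val
      have e2 := Nat.add_mul_mod_self_left y.1.val r y.2.val
      have m1 := Nat.mod_eq_of_lt x.1.isLt
      have m2 := Nat.mod_eq_of_lt y.1.isLt
      have : x.1.val % r = y.1.val % r := by rw [← e1, ← e2, heq]
      omega
    have h2 : x.2.val = y.2.val := by
      have : r * x.2.val = r * y.2.val := by omega
      exact Nat.eq_of_mul_eq_mul_left (by omega) this
    exact Prod.ext (Fin.ext h1) (Fin.ext h2)
  have hbij : Function.Bijective f := by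
    rw [Fintype.bijective_iff_injective_and_card]
    refine ⟨hinj, ?_⟩
    simp [ZMod.card, mul_comm]
  set φ : ZMod (a*r) →+* ZMod r := ZMod.castHom (dvd_mul_left r a) (ZMod r) with hφ
  have hφf : ∀ v : Fin r × Fin a, φ (f v) = (v.1.val : ZMod r) := by
    intro v
    rw [hf]
    push_cast [map_natCast]
    simp [ZMod.natCast_self]
  have hpart : ∀ x y : Fin r × Fin a, φ (f x - f y) ≠ 0 → x.1 ≠ y.1 := by
    intro x y h hxy
    apply h
    rw [map_sub, hφf, hφf, hxy, sub_self]
  -- the matching relation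
  set M : Fin r × Fin a → Fin r × Fin a → Prop := fun x y =>
    (f y = f x + 1 ∧ Even (f x).val) ∨ (f x = f y + 1 ∧ Even (f y).val) with hM
  have h0S : (0 : ZMod (a*r)) ∉ S := fun h => hmod 0 h (map_zero φ)
  set H : SimpleGraph (Fin r × Fin a) :=
    { Adj := fun x y => f x - f y ∈ S ∨ (m ∧ M x y)
      symm := by
        refine ⟨fun x y h => ?_⟩
        rcases h with h | ⟨hm', h⟩
        · left; rw [← neg_sub]; exact hsym _ h
        · right; exact ⟨hm', h.symm⟩
      loopless := by
        refine ⟨fun x h => ?_⟩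
        rcases h with h | ⟨_, h⟩
        · rw [sub_self] at h; exact h0S h
        · rcases h with ⟨h, _⟩ | ⟨h, _⟩ <;>
          · exact one_ne_zero (left_eq_add.mp h) } with hH
  refine ⟨H, ?_, ?_⟩
  · intro x y hxy
    have hne1 : x.1 ≠ y.1 := by
      apply hpart
      rcases hxy with h | ⟨_, ⟨h, _⟩ | ⟨h, _⟩⟩
      · exact hmod _ h
      · rw [h]
        intro hc
        rw [show f x - (f x + 1) = -1 by ring] at hc
        simp at hc
      · rw [h]
        intro hc
        rw [show f y + 1 - f y = 1 by ring] at hc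
        simp at hc
    exact ⟨fun h => hne1 (congrArg Prod.fst h), Or.inl hne1⟩
  · intro v
    set w := (f v).val with hwdef
    have hw : w < a*r := ZMod.val_lt (f v)
    have hfv : ((w : ℕ) : ZMod (a*r)) = f v := ZMod.natCast_zmod_val (f v)
    set ε : ZMod (a*r) := if Even w then -1 else 1 with hε
    obtain ⟨c, hc⟩ := hev
    -- characterize matching partners
    have hMchar : ∀ y, M v y ↔ f v - f y = ε := by
      intro y
      by_cases hEw : Even w
      · rw [hε, if_pos hEw]
        constructor
        · rintro (⟨h1, _⟩ | ⟨h1, h2⟩)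
          · rw [h1]; ring
          · exfalso
            have hy : f y = f v - 1 := by linear_combination -h1
            rcases Nat.eq_zero_or_pos w with hw0 | hw0
            · have : f v = 0 := by rw [← hfv, hw0, Nat.cast_zero]
              rw [this, zero_sub] at hy
              have : (f y).val = a*r - 1 := by
                rw [hy, ZMod.neg_val, if_neg (one_ne_zero), ZMod.val_one]
              rw [this] at h2
              rcases h2 with ⟨d, hd⟩
              omega
            · have : f y = ((w - 1 : ℕ) : ZMod (a*r)) := by
                rw [Nat.cast_sub hw0, hfv, Nat.cast_one, hy]
              have : (f y).val = w - 1 := by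
                rw [this, ZMod.val_cast_of_lt (by omega)]
              rw [this] at h2
              rcases hEw with ⟨d, hd⟩
              rcases h2 with ⟨e, he⟩
              omega
        · intro h
          left
          exact ⟨by linear_combination -h, hEw⟩
      · rw [hε, if_neg hEw]
        have hw0 : 0 < w := by
          rcases Nat.eq_zero_or_pos w with h0 | h0
          · exact absurd (h0 ▸ (Even.zero : Even 0)) hEw
          · exact h0
        constructor
        · rintro (⟨_, h2⟩ | ⟨h1, _⟩)
          · exact absurd h2 hEw
          · rw [h1]; ring
        · intro h
          right
          have hy : f y = f v - 1 := by linear_combination -h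
          refine ⟨by linear_combination h, ?_⟩
          have : f y = ((w - 1 : ℕ) : ZMod (a*r)) := by
            rw [Nat.cast_sub hw0, hfv, Nat.cast_one, hy]
          rw [this, ZMod.val_cast_of_lt (by omega)]
          rcases Nat.odd_iff.mpr (Nat.not_even_iff.mp hEw) with ⟨d, hd⟩
          exact ⟨d, by omega⟩
    have hε0 : ε ≠ 0 := by
      rw [hε]
      split <;> simp
    -- the neighbor set
    have hnsub : H.neighborSet v = (fun y => f v - f y) ⁻¹' ((S : Set (ZMod (a*r))) ∪ (if m then {ε} else ∅)) := by
      ext y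
      simp only [mem_neighborSet, Set.mem_preimage, Set.mem_union, Finset.mem_coe]
      constructor
      · rintro (h | ⟨hm', h⟩)
        · exact Or.inl h
        · right
          rw [if_pos hm']
          exact (hMchar y).mp h
      · rintro (h | h)
        · exact Or.inl h
        · by_cases hm' : m
          · rw [if_pos hm'] at h
            exact Or.inr ⟨hm', (hMchar y).mpr h⟩
          · rw [if_neg hm'] at h
            exact absurd h (Set.notMem_empty _)
    set D : Fin r × Fin a ≃ ZMod (a*r) := (Equiv.ofBijective f hbij).trans (Equiv.subLeft (f v)) with hD
    have hDfun : (fun y => f v - f y) = D := rfl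
    rw [ndeg, hnsub, hDfun, ← D.symm_symm, ← Equiv.image_eq_preimage_symm,
      Set.ncard_image_of_injective _ (D.symm.injective)]
    by_cases hm' : m
    · rw [if_pos hm', if_pos hm']
      have hεS : ε ∉ (S : Set (ZMod (a*r))) := by
        rw [hε]
        split
        · exact fun h => (hm hm').2 h
        · exact fun h => (hm hm').1 h
      rw [Set.ncard_union_eq (Set.disjoint_singleton_right.mpr hεS) (Set.toFinite _) (Set.toFinite _),
        Set.ncard_coe_finset, Set.ncard_singleton]
    · rw [if_neg hm', if_neg hm', Set.union_empty, Set.ncard_coe_finset, Nat.add_zero]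

lemma gbound (a r t : ℕ) (hr : 2 ≤ r) (h1 : 2*t + 2 ≤ a*(r-1))
    (h2 : Even a ∨ 2*t + 3 ≤ a*(r-1)) :
    2*(t + t/(r-1) + 1) + 2 ≤ a*r := by
  set q := t / (r-1) with hqdef
  set s := t % (r-1) with hsdef
  have hts : (r-1) * q + s = t := Nat.div_add_mod t (r-1)
  have hs : s < r - 1 := Nat.mod_lt t (by omega)
  have hr1 : r = (r - 1) + 1 := by omega
  have hmul : a * r = a * (r-1) + a := by
    conv_lhs => rw [hr1]
    ring
  have hq : 2*q*(r-1) ≤ 2*t := by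
    have : (r-1) * q ≤ t := by omega
    calc 2*q*(r-1) = 2*((r-1)*q) := by ring
      _ ≤ 2*t := by omega
  have hqa : 2*q < a := by
    have h3 : (2*q)*(r-1) < a*(r-1) := by
      calc (2*q)*(r-1) = 2*q*(r-1) := by ring
        _ ≤ 2*t := hq
        _ < a*(r-1) := by omega
    by_contra hc
    push_neg at hc
    exact absurd (Nat.mul_le_mul_right (r-1) hc) (by omega)
  rw [hmul]
  rcases h2 with he | h3
  · obtain ⟨b, hb⟩ := he
    have hq2 : 2*q + 2 ≤ a := by omega
    have : 2*(t + q + 1) + 2 = 2*t + 2 + (2*q + 2) := by ring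
    omega
  · omega

lemma gnotdvd (r t : ℕ) (hr : 2 ≤ r) : ¬ r ∣ (t + t/(r-1) + 1) := by
  set q := t / (r-1) with hqdef
  set s := t % (r-1) with hsdef
  have hts : (r-1) * q + s = t := Nat.div_add_mod t (r-1)
  have hs : s < r - 1 := Nat.mod_lt t (by omega)
  have hr1 : r = (r - 1) + 1 := by omega
  have e : q * r = (r-1)*q + q := by
    conv_lhs => rw [hr1]
    ring
  intro hdvd
  have he : t + t/(r-1) + 1 = q*r + (s+1) := by omega
  rw [he] at hdvd
  have h2 : r ∣ q * r := Dvd.intro_left q rfl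
  have h3 : r ∣ s + 1 := (Nat.dvd_add_right h2).mp hdvd
  have := Nat.le_of_dvd (by omega) h3
  omega

lemma buildS (a r : ℕ) (ha : 0 < a) (hr : 2 ≤ r) (hev : Even (a*r)) (C : Finset ℕ)
    (hC : ∀ c ∈ C, 0 < c ∧ 2*c < a*r ∧ ¬ r ∣ c) :
    ∃ S : Finset (ZMod (a*r)),
      S.card = 2 * C.card ∧ (∀ s ∈ S, -s ∈ S) ∧
      (∀ s ∈ S, ZMod.castHom (dvd_mul_left r a) (ZMod r) s ≠ 0) ∧
      ((∀ c ∈ C, c ≠ 1) → (1 : ZMod (a*r)) ∉ S ∧ (-1 : ZMod (a*r)) ∉ S) ∧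
      ((a*r/2 : ℕ) : ZMod (a*r)) ∉ S := by
  have hn2 : 2 ≤ a * r := le_trans hr (Nat.le_mul_of_pos_left r ha)
  haveI : NeZero (a*r) := ⟨by omega⟩
  haveI : Fact (1 < a*r) := ⟨hn2⟩
  haveI : NeZero r := ⟨by omega⟩
  have hval1 : ∀ c ∈ C, ((c:ℕ) : ZMod (a*r)).val = c := by
    intro c hc
    exact ZMod.val_cast_of_lt (by have := hC c hc; omega)
  have hne0 : ∀ c ∈ C, ((c:ℕ) : ZMod (a*r)) ≠ 0 := by
    intro c hc h0
    have h1 := hval1 c hc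
    rw [h0, ZMod.val_zero] at h1
    have := (hC c hc).1
    omega
  have hval2 : ∀ c ∈ C, (-((c:ℕ) : ZMod (a*r))).val = a*r - c := by
    intro c hc
    rw [ZMod.neg_val, if_neg (hne0 c hc), hval1 c hc]
  refine ⟨C.image (fun c => ((c:ℕ) : ZMod (a*r))) ∪
          C.image (fun c => -((c:ℕ) : ZMod (a*r))), ?_, ?_, ?_, ?_, ?_⟩
  · have hdisj : Disjoint (C.image (fun c => ((c:ℕ) : ZMod (a*r))))
        (C.image (fun c => -((c:ℕ) : ZMod (a*r)))) := by
      rw [Finset.disjoint_left]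
      rintro x hx1 hx2
      obtain ⟨c, hc, rfl⟩ := Finset.mem_image.mp hx1
      obtain ⟨c', hc', heq⟩ := Finset.mem_image.mp hx2
      have e1 := hval1 c hc
      have e2 := hval2 c' hc'
      rw [heq] at e2
      have b1 := (hC c hc).2.1
      have b2 := (hC c' hc').2.1
      omega
    rw [Finset.card_union_of_disjoint hdisj,
      Finset.card_image_of_injOn, Finset.card_image_of_injOn]
    · ring
    · intro c hc c' hc' heq
      have heq' : (-((c:ℕ) : ZMod (a*r))) = -((c':ℕ) : ZMod (a*r)) := heq
      have e1 := hval2 c hc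
      have e2 := hval2 c' hc'
      rw [heq'] at e1
      have b1 := (hC c hc).2.1
      have b2 := (hC c' hc').2.1
      omega
    · intro c hc c' hc' heq
      have heq' : (((c:ℕ) : ZMod (a*r))) = ((c':ℕ) : ZMod (a*r)) := heq
      have e1 := hval1 c hc
      have e2 := hval1 c' hc'
      rw [heq'] at e1
      omega
  · intro x hx
    rcases Finset.mem_union.mp hx with hx | hx
    · obtain ⟨c, hc, rfl⟩ := Finset.mem_image.mp hx
      exact Finset.mem_union_right _ (Finset.mem_image_of_mem _ hc)
    · obtain ⟨c, hc, rfl⟩ := Finset.mem_image.mp hx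
      rw [neg_neg]
      exact Finset.mem_union_left _ (Finset.mem_image_of_mem _ hc)
  · intro x hx
    rcases Finset.mem_union.mp hx with hx | hx
    · obtain ⟨c, hc, rfl⟩ := Finset.mem_image.mp hx
      rw [map_natCast]
      rw [Ne, ZMod.natCast_eq_zero_iff]
      exact (hC c hc).2.2
    · obtain ⟨c, hc, rfl⟩ := Finset.mem_image.mp hx
      rw [map_neg, neg_ne_zero, map_natCast, Ne, ZMod.natCast_eq_zero_iff]
      exact (hC c hc).2.2
  · intro h1C
    have hvalneg1 : (-1 : ZMod (a*r)).val = a*r - 1 := by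
      rw [ZMod.neg_val, if_neg one_ne_zero, ZMod.val_one]
    constructor
    · intro hx
      rcases Finset.mem_union.mp hx with hx | hx
      · obtain ⟨c, hc, heq⟩ := Finset.mem_image.mp hx
        have e1 := hval1 c hc
        rw [heq, ZMod.val_one] at e1
        exact h1C c hc e1.symm
      · obtain ⟨c, hc, heq⟩ := Finset.mem_image.mp hx
        have e1 := hval2 c hc
        rw [heq, ZMod.val_one] at e1
        have := (hC c hc).2.1
        omega
    · intro hx
      rcases Finset.mem_union.mp hx with hx | hx
      · obtain ⟨c, hc, heq⟩ := Finset.mem_image.mp hx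
        have e1 := hval1 c hc
        rw [heq, hvalneg1] at e1
        have := (hC c hc).2.1
        omega
      · obtain ⟨c, hc, heq⟩ := Finset.mem_image.mp hx
        have e1 := hval2 c hc
        rw [heq, hvalneg1] at e1
        have b1 := (hC c hc).2.1
        have h2 := (hC c hc).1
        have h3 := h1C c hc
        omega
  · intro hx
    obtain ⟨b, hb⟩ := hev
    have hhalf : a*r/2 = b := by omega
    have hvh : (((a*r/2 : ℕ)) : ZMod (a*r)).val = a*r/2 :=
      ZMod.val_cast_of_lt (by omega)
    rcases Finset.mem_union.mp hx with hx | hx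
    · obtain ⟨c, hc, heq⟩ := Finset.mem_image.mp hx
      have e1 := hval1 c hc
      rw [heq, hvh] at e1
      have := (hC c hc).2.1
      omega
    · obtain ⟨c, hc, heq⟩ := Finset.mem_image.mp hx
      have e1 := hval2 c hc
      rw [heq, hvh] at e1
      have b1 := (hC c hc).2.1
      have := (hC c hc).1
      omega

theorem stmt12 (a r k : ℕ) (ha : 0 < a) (hr : 0 < r) (heven : Even (a * r))
    (hk : k ≤ a * (r - 1)) :
    ∃ H : SimpleGraph (Fin r × Fin a),
      H ≤ SimpleGraph.fromRel (fun x y : Fin r × Fin a => x.1 ≠ y.1) ∧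
        ∀ v, ndeg H v = k := by
  rcases Nat.lt_or_ge r 2 with hr2 | hr2
  · -- r = 1, so k = 0
    have hr1 : r = 1 := by omega
    have hk0 : k = 0 := by subst hr1; simpa using hk
    refine ⟨⊥, bot_le, fun v => ?_⟩
    have : (⊥ : SimpleGraph (Fin r × Fin a)).neighborSet v = ∅ := by
      ext y; simp [SimpleGraph.mem_neighborSet]
    rw [ndeg, this, Set.ncard_empty, hk0]
  · have hn2 : 2 ≤ a * r := le_trans hr2 (Nat.le_mul_of_pos_left r ha)
    set g : ℕ → ℕ := fun t => t + t/(r-1) + 1 with hg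
    have ginj : Function.Injective g := by
      have : StrictMono g := by
        intro t t' h
        have := Nat.div_le_div_right (c := r-1) (Nat.le_of_lt h)
        simp only [hg]
        omega
      exact this.injective
    by_cases hke : Even k
    · -- even k : pure Cayley graph
      obtain ⟨b, hb⟩ := hke
      set C : Finset ℕ := (Finset.range (k/2)).image g with hC
      have hCcard : C.card = k/2 := by
        rw [hC, Finset.card_image_of_injective _ ginj, Finset.card_range]
      have hCprop : ∀ c ∈ C, 0 < c ∧ 2*c < a*r ∧ ¬ r ∣ c := by
        intro c hc
        obtain ⟨t, ht, rfl⟩ := Finset.mem_image.mp hc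
        rw [Finset.mem_range] at ht
        have ht2 : 2*t + 2 ≤ a*(r-1) := by omega
        have hside : Even a ∨ 2*t + 3 ≤ a*(r-1) := by
          by_cases hae : Even a
          · exact Or.inl hae
          · right
            have hre : Even r := by
              rcases Nat.even_mul.mp heven with h | h
              · exact absurd h hae
              · exact h
            have hodd : ¬ Even (a*(r-1)) := by
              rw [Nat.even_mul]
              push_neg
              refine ⟨hae, fun h => ?_⟩
              obtain ⟨u, hu⟩ := hre
              obtain ⟨e, he⟩ := h
              omega
            have : k ≠ a*(r-1) := fun h => hodd (h ▸ ⟨b, hb⟩)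
            omega
        have hb2 := gbound a r t hr2 ht2 hside
        refine ⟨Nat.succ_pos _, ?_, gnotdvd r t hr2⟩
        show 2*(t + t/(r-1) + 1) < a*r
        omega
      obtain ⟨S, hScard, hSsym, hSmod, _, _⟩ := buildS a r ha hr2 heven C hCprop
      obtain ⟨H, hle, hdeg⟩ := cayley_exists a r ha hr2 heven S False hSsym hSmod False.elim
      refine ⟨H, hle, fun v => ?_⟩
      rw [hdeg v, if_neg not_false, hScard, hCcard]
      omega
    · by_cases hae : Even a
      · -- odd k, even a : Cayley graph plus a perfect matching
        obtain ⟨b, hb⟩ := hae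
        set C : Finset ℕ := (Finset.range (k/2)).image (fun t => g (t+1)) with hC
        have hCcard : C.card = k/2 := by
          rw [hC, Finset.card_image_of_injective, Finset.card_range]
          exact fun t t' h => by have := ginj h; omega
        have hCprop : ∀ c ∈ C, 0 < c ∧ 2*c < a*r ∧ ¬ r ∣ c := by
          intro c hc
          obtain ⟨t, ht, rfl⟩ := Finset.mem_image.mp hc
          rw [Finset.mem_range] at ht
          have hkodd : ¬ Even k := hke
          have hk2 : k % 2 = 1 := Nat.odd_iff.mp (Nat.not_even_iff_odd.mp hke)
          have hklt : k < a*(r-1) := by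
            have hevp : Even (a*(r-1)) := ⟨b*(r-1), by rw [hb, Nat.add_mul]⟩
            obtain ⟨e, he⟩ := hevp
            omega
          have ht2 : 2*(t+1) + 2 ≤ a*(r-1) := by omega
          have hb2 := gbound a r (t+1) hr2 ht2 (Or.inl ⟨b, hb⟩)
          refine ⟨Nat.succ_pos _, ?_, gnotdvd r (t+1) hr2⟩
          show 2*((t+1) + (t+1)/(r-1) + 1) < a*r
          omega
        have hCne1 : ∀ c ∈ C, c ≠ 1 := by
          intro c hc
          obtain ⟨t, _, rfl⟩ := Finset.mem_image.mp hc
          show (t+1) + (t+1)/(r-1) + 1 ≠ 1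
          have h3 := Nat.le_add_right (t+1) ((t+1)/(r-1))
          omega
        obtain ⟨S, hScard, hSsym, hSmod, h1S, _⟩ := buildS a r ha hr2 heven C hCprop
        obtain ⟨H, hle, hdeg⟩ := cayley_exists a r ha hr2 heven S True hSsym hSmod
          (fun _ => h1S hCne1)
        refine ⟨H, hle, fun v => ?_⟩
        have hk2 : k % 2 = 1 := Nat.odd_iff.mp (Nat.not_even_iff_odd.mp hke)
        rw [hdeg v, if_pos trivial, hScard, hCcard]
        omega
      · -- odd k, odd a (hence r even) : Cayley graph containing the element of order 2
        have hre : Even r := by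
          rcases Nat.even_mul.mp heven with h | h
          · exact absurd h hae
          · exact h
        obtain ⟨u, hu⟩ := hre
        haveI : NeZero (a*r) := ⟨by omega⟩
        set C : Finset ℕ := (Finset.range (k/2)).image g with hC
        have hCcard : C.card = k/2 := by
          rw [hC, Finset.card_image_of_injective _ ginj, Finset.card_range]
        have hCprop : ∀ c ∈ C, 0 < c ∧ 2*c < a*r ∧ ¬ r ∣ c := by
          intro c hc
          obtain ⟨t, ht, rfl⟩ := Finset.mem_image.mp hc
          rw [Finset.mem_range] at ht
          have hk2 : k % 2 = 1 := Nat.odd_iff.mp (Nat.not_even_iff_odd.mp hke)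
          have ht2 : 2*t + 2 ≤ a*(r-1) := by omega
          have ht3 : 2*t + 3 ≤ a*(r-1) := by omega
          have hb2 := gbound a r t hr2 ht2 (Or.inr ht3)
          refine ⟨Nat.succ_pos _, ?_, gnotdvd r t hr2⟩
          show 2*(t + t/(r-1) + 1) < a*r
          omega
        obtain ⟨S₀, hScard, hSsym, hSmod, _, hhalf⟩ := buildS a r ha hr2 heven C hCprop
        set h2 : ZMod (a*r) := ((a*r/2 : ℕ) : ZMod (a*r)) with hh2
        have hhalfval : a*r/2 = a*u := by
          have h5 : a*r = (a*u)*2 := by rw [hu]; try ring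
          omega
        have hself : -h2 = h2 := by
          have hadd : h2 + h2 = 0 := by
            rw [hh2, ← Nat.cast_add]
            have : a*r/2 + a*r/2 = a*r := by
              obtain ⟨w, hw⟩ := heven
              omega
            rw [this, ZMod.natCast_self]
          exact neg_eq_of_add_eq_zero_left hadd
        have hmodh : ZMod.castHom (dvd_mul_left r a) (ZMod r) h2 ≠ 0 := by
          rw [hh2, map_natCast, Ne, ZMod.natCast_eq_zero_iff]
          intro hdvd
          rw [hhalfval] at hdvd
          obtain ⟨m, hm⟩ := hdvd
          have hu0 : 0 < u := by omega
          have h7 : a * u = (u + u) * m := by rw [← hu]; exact hm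
          have h6 : u * a = u * (2 * m) := by
            calc u * a = a * u := Nat.mul_comm u a
              _ = (u + u) * m := h7
              _ = u * (2 * m) := by ring
          have ha2 : a = 2 * m := Nat.eq_of_mul_eq_mul_left hu0 h6
          exact hae ⟨m, by omega⟩
        set S : Finset (ZMod (a*r)) := insert h2 S₀ with hS
        have hSfullcard : S.card = k := by
          have hk2 : k % 2 = 1 := Nat.odd_iff.mp (Nat.not_even_iff_odd.mp hke)
          rw [hS, Finset.card_insert_of_notMem hhalf, hScard, hCcard]
          omega
        have hSsym' : ∀ s ∈ S, -s ∈ S := by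
          intro s hs
          rcases Finset.mem_insert.mp hs with rfl | hs
          · rw [hself]; exact Finset.mem_insert_self _ _
          · exact Finset.mem_insert_of_mem (hSsym s hs)
        have hSmod' : ∀ s ∈ S, ZMod.castHom (dvd_mul_left r a) (ZMod r) s ≠ 0 := by
          intro s hs
          rcases Finset.mem_insert.mp hs with rfl | hs
          · exact hmodh
          · exact hSmod s hs
        obtain ⟨H, hle, hdeg⟩ := cayley_exists a r ha hr2 heven S False hSsym' hSmod' False.elim
        refine ⟨H, hle, fun v => ?_⟩
        rw [hdeg v, if_neg not_false, hSfullcard]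
        omega
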